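/- Let P ⊂ A be a unital inclusion of C*-algebras and suppose there exists a unital injective *-homomorphism β from A into the sequence algebra P^∞ = ℓ^∞(ℕ, P)/c₀(P) such that β(x) = x (the constant sequence class) for all x ∈ P. If A has the LP property, then P has the LP property. -/

import Mathlib

open Filter Topology

section Helpers

variable {P : Type*} [CStarAlgebra P]

private lemma Tsymm {u v : ℕ → P} (h : Tendsto (fun n => u n - v n) atTop (𝓝 0)) :
    Tendsto (fun n => v n - u n) atTop (𝓝 0) := by
  simpa [neg_sub] using h.neg

private lemma T3 {u v w : ℕ → P} (h1 : Tendsto (fun n => u n - v n) atTop (𝓝 0))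
    (h2 : Tendsto (fun n => v n - w n) atTop (𝓝 0)) :
    Tendsto (fun n => u n - w n) atTop (𝓝 0) := by
  simpa [sub_add_sub_cancel] using h1.add h2

private lemma Tadd {u v u' v' : ℕ → P} (h1 : Tendsto (fun n => u n - v n) atTop (𝓝 0))
    (h2 : Tendsto (fun n => u' n - v' n) atTop (𝓝 0)) :
    Tendsto (fun n => (u n + u' n) - (v n + v' n)) atTop (𝓝 0) := by
  simpa [add_sub_add_comm] using h1.add h2

private lemma Tmulbd {u v : ℕ → P} {C : ℝ} (h : Tendsto u atTop (𝓝 0))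
    (hv : ∀ n, ‖v n‖ ≤ C) : Tendsto (fun n => u n * v n) atTop (𝓝 0) := by
  refine tendsto_zero_iff_norm_tendsto_zero.mpr ?_
  refine squeeze_zero (fun n => norm_nonneg _)
    (fun n => (norm_mul_le _ _).trans (mul_le_mul_of_nonneg_left (hv n) (norm_nonneg _))) ?_
  simpa using (tendsto_zero_iff_norm_tendsto_zero.mp h).mul_const C

private lemma Tbdmul {u v : ℕ → P} {C : ℝ} (h : Tendsto u atTop (𝓝 0))
    (hv : ∀ n, ‖v n‖ ≤ C) : Tendsto (fun n => v n * u n) atTop (𝓝 0) := by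
  refine tendsto_zero_iff_norm_tendsto_zero.mpr ?_
  refine squeeze_zero (fun n => norm_nonneg _)
    (fun n => (norm_mul_le _ _).trans (mul_le_mul_of_nonneg_right (hv n) (norm_nonneg _))) ?_
  simpa using (tendsto_zero_iff_norm_tendsto_zero.mp h).const_mul C

private lemma ev_norm_le {u : ℕ → P} (h : Tendsto u atTop (𝓝 0)) {d : ℝ} (hd : 0 < d) :
    ∀ᶠ n in atTop, ‖u n‖ ≤ d :=
  (tendsto_zero_iff_norm_tendsto_zero.mp h).eventually (eventually_le_nhds hd)

end Helpers

section Proj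

variable {P : Type*} [CStarAlgebra P]

private lemma exists_projection_near {a : P} (ha : IsSelfAdjoint a) {δ : ℝ} (hδ : 0 < δ)
    (hδ4 : δ < 1/4) (h : ‖a * a - a‖ ≤ δ) :
    ∃ r : P, IsSelfAdjoint r ∧ IsIdempotentElem r ∧ ‖r - a‖ ≤ 2 * δ := by
  have key : cfc (fun t : ℝ => t * t - t) a = a * a - a := by
    rw [cfc_sub (fun t : ℝ => t * t) (fun t : ℝ => t) a, cfc_mul (fun t : ℝ => t) (fun t : ℝ => t) a,
      cfc_id' ℝ a]
  have hspec : ∀ t ∈ spectrum ℝ a, |t * t - t| ≤ δ := by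
    intro t ht
    have h1 : ‖(fun t : ℝ => t * t - t) t‖ ≤ ‖cfc (fun t : ℝ => t * t - t) a‖ :=
      norm_apply_le_norm_cfc (fun t : ℝ => t * t - t) a ht
    rw [key] at h1
    simpa [Real.norm_eq_abs] using h1.trans h
  have hgap : ∀ t ∈ spectrum ℝ a, (t < 1/2 ∧ |t| ≤ 2 * δ) ∨ (¬ t < 1/2 ∧ |t - 1| ≤ 2 * δ) := by
    intro t ht
    have h1 := hspec t ht
    have h2 : |t| * |t - 1| ≤ δ := by
      rw [← abs_mul]
      calc |t * (t - 1)| = |t * t - t| := by ring_nf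
      _ ≤ δ := h1
    by_cases hlt : t < 1/2
    · refine Or.inl ⟨hlt, ?_⟩
      have h3 : 1/2 ≤ |t - 1| := by
        rw [abs_sub_comm, abs_of_nonneg (by linarith)]
        linarith
      nlinarith [abs_nonneg t]
    · refine Or.inr ⟨hlt, ?_⟩
      push_neg at hlt
      have h3 : 1/2 ≤ |t| := by rw [abs_of_nonneg (by linarith)]; linarith
      nlinarith [abs_nonneg (t - 1)]
  set f : ℝ → ℝ := fun t => if t < 1/2 then 0 else 1 with hf
  have hcont : ContinuousOn f (spectrum ℝ a) := by
    intro t ht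
    apply ContinuousAt.continuousWithinAt
    rcases hgap t ht with ⟨hlt, -⟩ | ⟨hge, -⟩
    · refine Filter.EventuallyEq.continuousAt (y := (0:ℝ)) ?_
      filter_upwards [Iio_mem_nhds hlt] with s hs
      exact if_pos hs
    · push_neg at hge
      have hgt : 1/2 < t := by
        rcases lt_or_eq_of_le hge with h' | h'
        · exact h'
        · exfalso
          have h5 := hspec t ht
          rw [← h'] at h5
          rw [show |(1:ℝ)/2 * (1/2) - 1/2| = 1/4 by norm_num] at h5
          linarith
      refine Filter.EventuallyEq.continuousAt (y := (1:ℝ)) ?_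
      filter_upwards [Ioi_mem_nhds hgt] with s hs
      exact if_neg (not_lt.mpr (le_of_lt hs))
  refine ⟨cfc f a, cfc_predicate f a, ?_, ?_⟩
  · show cfc f a * cfc f a = cfc f a
    rw [← cfc_mul f f a hcont hcont]
    refine cfc_congr fun t _ => ?_
    by_cases hlt : t < 1/2
    · simp only [hf, if_pos hlt, mul_zero]
    · simp only [hf, if_neg hlt, mul_one]
  · have hsub : cfc f a - a = cfc (fun t : ℝ => f t - t) a := by
      rw [cfc_sub f (fun t : ℝ => t) a hcont (continuous_id.continuousOn), cfc_id' ℝ a]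
    rw [hsub]
    refine norm_cfc_le (by linarith) fun t ht => ?_
    rcases hgap t ht with ⟨hlt, hb⟩ | ⟨hge, hb⟩
    · show ‖(if t < 1/2 then (0:ℝ) else 1) - t‖ ≤ 2 * δ
      rw [if_pos hlt, Real.norm_eq_abs, zero_sub, abs_neg]
      exact hb
    · show ‖(if t < 1/2 then (0:ℝ) else 1) - t‖ ≤ 2 * δ
      rw [if_neg hge, Real.norm_eq_abs, abs_sub_comm]
      exact hb


end Proj

section Beta

variable {P A : Type*} [CStarAlgebra P] [CStarAlgebra A] (β : A → ℕ → P)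

private lemma beta_zero
    (hadd' : ∀ x y, Tendsto (fun n => β (x + y) n - (β x n + β y n)) atTop (𝓝 0)) :
    Tendsto (fun n => β 0 n) atTop (𝓝 0) := by
  have h := hadd' 0 0
  simp only [add_zero] at h
  simpa using (Tsymm h)

private lemma beta_sum
    (hadd' : ∀ x y, Tendsto (fun n => β (x + y) n - (β x n + β y n)) atTop (𝓝 0))
    (hsmul' : ∀ (c : ℂ) x, Tendsto (fun n => β (c • x) n - c • β x n) atTop (𝓝 0))
    {ι : Type*} (s : Finset ι) (c : ι → ℂ) (a : ι → A) :
    Tendsto (fun n => β (∑ i ∈ s, c i • a i) n - ∑ i ∈ s, c i • β (a i) n) atTop (𝓝 0) := by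
  classical
  induction s using Finset.induction with
  | empty => simpa using beta_zero β hadd'
  | insert _ _ hj ih =>
    rename_i j s'
    simp only [Finset.sum_insert hj]
    exact T3 (hadd' (c j • a j) (∑ i ∈ s', c i • a i)) (Tadd (hsmul' (c j) (a j)) ih)

private lemma beta_contract [PartialOrder P] [StarOrderedRing P]
    [PartialOrder A] [StarOrderedRing A]
    (hbd : ∀ x, ∃ C : ℝ, ∀ n, ‖β x n‖ ≤ C)
    (hadd' : ∀ x y, Tendsto (fun n => β (x + y) n - (β x n + β y n)) atTop (𝓝 0))
    (hmul' : ∀ x y, Tendsto (fun n => β (x * y) n - β x n * β y n) atTop (𝓝 0))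
    (hsmul' : ∀ (c : ℂ) x, Tendsto (fun n => β (c • x) n - c • β x n) atTop (𝓝 0))
    (hstar' : ∀ x, Tendsto (fun n => β (star x) n - star (β x n)) atTop (𝓝 0))
    (hone' : Tendsto (fun n => β 1 n - 1) atTop (𝓝 0))
    (y : A) {ε : ℝ} (hε : 0 < ε) :
    ∀ᶠ n in atTop, ‖β y n‖ ≤ ‖y‖ + ε := by
  rcases subsingleton_or_nontrivial P with hP | hP
  · filter_upwards with n
    have h0 : β y n = 0 := Subsingleton.elim _ _
    rw [h0, norm_zero]
    positivity
  -- star-mul asymptotics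
  have hsms : ∀ x : A,
      Tendsto (fun n => β (star x * x) n - star (β x n) * β x n) atTop (𝓝 0) := by
    intro x
    obtain ⟨C, hC⟩ := hbd x
    have h2 : Tendsto (fun n => (β (star x) n - star (β x n)) * β x n) atTop (𝓝 0) :=
      Tmulbd (hstar' x) hC
    have h3 : Tendsto (fun n => (β (star x * x) n - β (star x) n * β x n) +
        (β (star x) n - star (β x n)) * β x n) atTop (𝓝 0) := by
      simpa using (hmul' (star x) x).add h2
    exact h3.congr fun n => by rw [sub_mul]; abel
  set g : A := (‖y‖^2 : ℝ) • (1 : A) - star y * y with hg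
  have hg_nonneg : 0 ≤ g := by
    rw [hg, sub_nonneg]
    have h1 : star y * y ≤ algebraMap ℝ A (‖y‖^2) := CStarAlgebra.star_mul_le_algebraMap_norm_sq
    rwa [Algebra.algebraMap_eq_smul_one] at h1
  have hc_nonneg : 0 ≤ CFC.sqrt g := CFC.sqrt_nonneg (a := g)
  set c : A := CFC.sqrt g with hc
  have hc_sa : IsSelfAdjoint c := IsSelfAdjoint.of_nonneg hc_nonneg
  have hcc : star c * c = g := by rw [hc_sa.star_eq, hc, CFC.sqrt_mul_sqrt_self g hg_nonneg]
  have hE0 : Tendsto (fun n => star (β y n) * β y n + star (β c n) * β c n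
      - (‖y‖^2 : ℝ) • (1:P)) atTop (𝓝 0) := by
    have A1 : Tendsto (fun n => star (β y n) * β y n - β (star y * y) n) atTop (𝓝 0) :=
      Tsymm (hsms y)
    have A2 : Tendsto (fun n => star (β c n) * β c n - β g n) atTop (𝓝 0) := by
      have h := Tsymm (hsms c)
      rwa [hcc] at h
    have A3 := Tadd A1 A2
    have hsum : star y * y + g = (‖y‖^2 : ℝ) • (1 : A) := by
      rw [hg]; abel
    have A4 : Tendsto (fun n => (β (star y * y) n + β g n)
        - β ((‖y‖^2 : ℝ) • (1:A)) n) atTop (𝓝 0) := by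
      have h := Tsymm (hadd' (star y * y) g)
      rwa [hsum] at h
    have A6 : Tendsto (fun n => β ((‖y‖^2 : ℝ) • (1:A)) n - (‖y‖^2 : ℝ) • β 1 n)
        atTop (𝓝 0) := by
      have h := hsmul' ((‖y‖^2 : ℝ) : ℂ) 1
      simp only [Complex.coe_smul] at h
      exact h
    have A7 : Tendsto (fun n => (‖y‖^2 : ℝ) • β 1 n - (‖y‖^2 : ℝ) • (1:P)) atTop (𝓝 0) := by
      simpa [smul_sub] using hone'.const_smul (‖y‖^2 : ℝ)
    exact T3 A3 (T3 A4 (T3 A6 A7))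
  have hε' : 0 < 2 * ε * ‖y‖ + ε^2 := by
    have h0 : (0:ℝ) ≤ ‖y‖ := norm_nonneg y
    nlinarith
  filter_upwards [ev_norm_le hE0 hε'] with n hn
  set u : P := star (β y n) * β y n with hu
  set v : P := star (β c n) * β c n with hv
  set En : P := u + v - (‖y‖^2 : ℝ) • (1:P) with hEn
  have hu0 : (0:P) ≤ u := star_mul_self_nonneg _
  have hv0 : (0:P) ≤ v := star_mul_self_nonneg _
  have hEsa : IsSelfAdjoint En := by
    rw [hEn]
    exact ((IsSelfAdjoint.star_mul_self _).add (IsSelfAdjoint.star_mul_self _)).sub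
      (IsSelfAdjoint.smul (star_trivial (‖y‖^2 : ℝ)) (IsSelfAdjoint.one P))
  have hnE : ‖En‖ ≤ 2 * ε * ‖y‖ + ε^2 := hn
  have hule : u ≤ (‖y‖^2 + ‖En‖) • (1:P) := by
    have e1 : u = ((‖y‖^2 : ℝ) • (1:P) + En) - v := by rw [hEn]; abel
    calc u = ((‖y‖^2 : ℝ) • (1:P) + En) - v := e1
      _ ≤ (‖y‖^2 : ℝ) • (1:P) + En := by
          rw [sub_le_iff_le_add]
          exact le_add_of_nonneg_right hv0
      _ ≤ (‖y‖^2 : ℝ) • (1:P) + ‖En‖ • (1:P) := by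
          refine add_le_add le_rfl ?_
          have h := IsSelfAdjoint.le_algebraMap_norm_self hEsa
          rwa [Algebra.algebraMap_eq_smul_one] at h
      _ = (‖y‖^2 + ‖En‖) • (1:P) := by rw [add_smul]
  have hnorm : ‖u‖ ≤ ‖y‖^2 + ‖En‖ := by
    have h1 : ‖u‖ ≤ ‖(‖y‖^2 + ‖En‖) • (1:P)‖ :=
      CStarAlgebra.norm_le_norm_of_nonneg_of_le hu0 hule
    have h2 : ‖(‖y‖^2 + ‖En‖) • (1:P)‖ = ‖y‖^2 + ‖En‖ := by
      rw [norm_smul, norm_one, mul_one, Real.norm_eq_abs, abs_of_nonneg (by positivity)]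
    rwa [h2] at h1
  have hsq : ‖β y n‖ * ‖β y n‖ ≤ ‖y‖^2 + ‖En‖ := by
    rw [hu, CStarRing.norm_star_mul_self] at hnorm
    exact hnorm
  have h0 := norm_nonneg (β y n)
  by_contra hcon
  push_neg at hcon
  have hMε : (0:ℝ) < ‖y‖ + ε := by positivity
  have hsq2 : (‖y‖ + ε) * (‖y‖ + ε) < ‖β y n‖ * ‖β y n‖ :=
    mul_lt_mul' hcon.le hcon hMε.le (lt_of_le_of_lt hMε.le hcon)
  nlinarith [hnE, hsq]

end Beta


/-- A topological star algebra has the LP property if the linear span of its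
projections (self-adjoint idempotents) is dense. -/
def LPProperty (A : Type*) [NonUnitalRing A] [Star A] [Module ℂ A]
    [TopologicalSpace A] : Prop :=
  Dense (↑(Submodule.span ℂ {p : A | IsSelfAdjoint p ∧ IsIdempotentElem p}) : Set A)

/-- Let `P ⊆ A` (via a unital injective *-homomorphism `ι`) and
suppose there is a unital injective *-homomorphism `β : A → P^∞ = ℓ^∞(ℕ,P)/c₀(P)`
restricting to the canonical (constant-sequence) embedding on `P`.  Here `β` is
encoded by bounded sequence representatives: all *-homomorphism identities hold
modulo `c₀(P)`, i.e. up to sequences tending to `0` in norm.  If `A` has the LP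
property, then so does `P`. -/
theorem linear_span_stmt14 {P A : Type*} [CStarAlgebra P] [CStarAlgebra A]
    (ι : P →⋆ₐ[ℂ] A) (hι : Function.Injective ι)
    (β : A → ℕ → P)
    (hbd : ∀ x, ∃ C : ℝ, ∀ n, ‖β x n‖ ≤ C)
    (hadd : ∀ x y, Tendsto (fun n => ‖β (x + y) n - (β x n + β y n)‖) atTop (𝓝 0))
    (hmul : ∀ x y, Tendsto (fun n => ‖β (x * y) n - β x n * β y n‖) atTop (𝓝 0))
    (hsmul : ∀ (c : ℂ) (x), Tendsto (fun n => ‖β (c • x) n - c • β x n‖) atTop (𝓝 0))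
    (hstar : ∀ x, Tendsto (fun n => ‖β (star x) n - star (β x n)‖) atTop (𝓝 0))
    (hone : Tendsto (fun n => ‖β 1 n - 1‖) atTop (𝓝 0))
    (hfix : ∀ p : P, Tendsto (fun n => ‖β (ι p) n - p‖) atTop (𝓝 0))
    (hinj : ∀ x y : A, Tendsto (fun n => ‖β x n - β y n‖) atTop (𝓝 0) → x = y)
    (hA : LPProperty A) : LPProperty P := by
  classical
  letI : PartialOrder P := CStarAlgebra.spectralOrder P
  letI : StarOrderedRing P := CStarAlgebra.spectralOrderedRing P
  letI : PartialOrder A := CStarAlgebra.spectralOrder A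
  letI : StarOrderedRing A := CStarAlgebra.spectralOrderedRing A
  have hadd' : ∀ x y, Tendsto (fun n => β (x + y) n - (β x n + β y n)) atTop (𝓝 0) :=
    fun x y => tendsto_zero_iff_norm_tendsto_zero.mpr (hadd x y)
  have hmul' : ∀ x y, Tendsto (fun n => β (x * y) n - β x n * β y n) atTop (𝓝 0) :=
    fun x y => tendsto_zero_iff_norm_tendsto_zero.mpr (hmul x y)
  have hsmul' : ∀ (c : ℂ) (x), Tendsto (fun n => β (c • x) n - c • β x n) atTop (𝓝 0) :=
    fun c x => tendsto_zero_iff_norm_tendsto_zero.mpr (hsmul c x)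
  have hstar' : ∀ x, Tendsto (fun n => β (star x) n - star (β x n)) atTop (𝓝 0) :=
    fun x => tendsto_zero_iff_norm_tendsto_zero.mpr (hstar x)
  have hone' : Tendsto (fun n => β 1 n - 1) atTop (𝓝 0) :=
    tendsto_zero_iff_norm_tendsto_zero.mpr hone
  have hfix' : ∀ p : P, Tendsto (fun n => β (ι p) n - p) atTop (𝓝 0) :=
    fun p => tendsto_zero_iff_norm_tendsto_zero.mpr (hfix p)
  show Dense (↑(Submodule.span ℂ {p : P | IsSelfAdjoint p ∧ IsIdempotentElem p}) : Set P)
  rw [Metric.dense_iff]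
  intro q ε hε
  have hq := hA (ι q)
  rw [Metric.mem_closure_iff] at hq
  obtain ⟨x, hxS, hxd⟩ := hq (ε/4) (by positivity)
  obtain ⟨m, f, gg, hxsum⟩ := Submodule.mem_span_set'.mp hxS
  set p : Fin m → A := fun i => (gg i : A) with hp
  have hpsa : ∀ i, IsSelfAdjoint (p i) := fun i => ((gg i).2).1
  have hpid : ∀ i, IsIdempotentElem (p i) := fun i => ((gg i).2).2
  set S : ℝ := ∑ i, ‖f i‖ with hS
  have hS0 : 0 ≤ S := Finset.sum_nonneg (fun i _ => norm_nonneg _)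
  set ε'' : ℝ := ε / (4 * (S + 1)) with hε''def
  have hε''0 : 0 < ε'' := by rw [hε''def]; positivity
  have hproj : ∀ i : Fin m, ∀ᶠ n in atTop, ∃ r : P,
      (IsSelfAdjoint r ∧ IsIdempotentElem r) ∧ ‖r - β (p i) n‖ ≤ ε'' := by
    intro i
    obtain ⟨C, hC⟩ := hbd (p i)
    set b : ℕ → P := fun n => (2⁻¹ : ℝ) • (β (p i) n + star (β (p i) n)) with hbdef
    have hbsa : ∀ n, IsSelfAdjoint (b n) :=
      fun n => IsSelfAdjoint.smul (star_trivial _) (IsSelfAdjoint.add_star_self _)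
    have hbC : ∀ n, ‖b n‖ ≤ C := by
      intro n
      rw [hbdef]
      calc ‖(2⁻¹ : ℝ) • (β (p i) n + star (β (p i) n))‖
          ≤ 2⁻¹ * (‖β (p i) n‖ + ‖star (β (p i) n)‖) := by
            rw [norm_smul, Real.norm_eq_abs, abs_of_nonneg (by norm_num : (0:ℝ) ≤ 2⁻¹)]
            exact mul_le_mul_of_nonneg_left (norm_add_le _ _) (by norm_num)
      _ ≤ C := by rw [norm_star]; linarith [hC n]
    have hb0 : Tendsto (fun n => b n - β (p i) n) atTop (𝓝 0) := by
      have h1 : Tendsto (fun n => β (p i) n - star (β (p i) n)) atTop (𝓝 0) := by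
        have h := hstar' (p i)
        rw [(hpsa i).star_eq] at h
        exact h
      have h2 : Tendsto (fun n => (2⁻¹ : ℝ) • (star (β (p i) n) - β (p i) n)) atTop (𝓝 0) := by
        simpa using (Tsymm h1).const_smul (2⁻¹ : ℝ)
      refine h2.congr fun n => ?_
      rw [hbdef]
      module
    have hbb : Tendsto (fun n => b n * b n - b n) atTop (𝓝 0) := by
      have T1 : Tendsto (fun n => b n * (b n - β (p i) n)) atTop (𝓝 0) := Tbdmul hb0 hbC
      have T2 : Tendsto (fun n => (b n - β (p i) n) * β (p i) n) atTop (𝓝 0) := Tmulbd hb0 hC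
      have T3' : Tendsto (fun n => β (p i) n * β (p i) n - β (p i) n) atTop (𝓝 0) := by
        have h := Tsymm (hmul' (p i) (p i))
        rw [hpid i] at h
        exact h
      have T4 : Tendsto (fun n => β (p i) n - b n) atTop (𝓝 0) := Tsymm hb0
      have hall : Tendsto (fun n => b n * (b n - β (p i) n) + (b n - β (p i) n) * β (p i) n
          + (β (p i) n * β (p i) n - β (p i) n) + (β (p i) n - b n)) atTop (𝓝 0) := by
        simpa using ((T1.add T2).add T3').add T4
      refine hall.congr fun n => ?_
      rw [mul_sub, sub_mul]
      abel
    set δ : ℝ := min (ε''/4) (1/8) with hδdef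
    have hδ0 : 0 < δ := lt_min (by positivity) (by norm_num)
    have hδ4 : δ < 1/4 := lt_of_le_of_lt (min_le_right _ _) (by norm_num)
    filter_upwards [ev_norm_le hbb hδ0, ev_norm_le hb0 (half_pos hε''0)] with n h1 h2
    obtain ⟨r, hrsa, hrid, hrn⟩ := exists_projection_near (hbsa n) hδ0 hδ4 h1
    refine ⟨r, ⟨hrsa, hrid⟩, ?_⟩
    have htri : ‖r - β (p i) n‖ ≤ ‖r - b n‖ + ‖b n - β (p i) n‖ := by
      have h3 := dist_triangle r (b n) (β (p i) n)
      simpa [dist_eq_norm] using h3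
    have hδe : 2 * δ ≤ ε''/2 := by
      have h4 := min_le_left (ε''/4) (1/8)
      rw [hδdef]
      linarith [h4]
    linarith [htri, hrn, h2]
  have hsum0 : Tendsto (fun n => β x n - ∑ i, f i • β (p i) n) atTop (𝓝 0) := by
    have h := beta_sum β hadd' hsmul' Finset.univ f p
    simp only [hp, hxsum] at h
    exact h
  have hdiff : ∀ᶠ n in atTop, ‖β x n - β (ι q) n‖ ≤ ε/4 + ε/8 := by
    have h1 := hadd' (x - ι q) (ι q)
    simp only [sub_add_cancel] at h1
    have h2 := beta_contract β hbd hadd' hmul' hsmul' hstar' hone' (x - ι q)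
      (show (0:ℝ) < ε/16 by positivity)
    have hxq : ‖x - ι q‖ < ε/4 := by
      rw [← dist_eq_norm, dist_comm]
      exact hxd
    filter_upwards [ev_norm_le h1 (show (0:ℝ) < ε/16 by positivity), h2] with n hn1 hn2
    have e : β x n - β (ι q) n
        = (β x n - (β (x - ι q) n + β (ι q) n)) + β (x - ι q) n := by abel
    rw [e]
    calc ‖(β x n - (β (x - ι q) n + β (ι q) n)) + β (x - ι q) n‖
        ≤ ‖β x n - (β (x - ι q) n + β (ι q) n)‖ + ‖β (x - ι q) n‖ := norm_add_le _ _
      _ ≤ ε/16 + (‖x - ι q‖ + ε/16) := add_le_add hn1 hn2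
      _ ≤ ε/4 + ε/8 := by linarith
  obtain ⟨n, hn1, hn2, hn3, hn4⟩ := ((eventually_all.mpr hproj).and (hdiff.and
    ((ev_norm_le (hfix' q) (show (0:ℝ) < ε/16 by positivity)).and
      (ev_norm_le hsum0 (show (0:ℝ) < ε/16 by positivity))))).exists
  choose r hrP hrnear using hn1
  refine ⟨∑ i, f i • r i, ?_, ?_⟩
  · rw [Metric.mem_ball, dist_eq_norm]
    have hT1 : ‖(∑ i, f i • r i) - ∑ i, f i • β (p i) n‖ ≤ S * ε'' := by
      rw [← Finset.sum_sub_distrib]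
      calc ‖∑ i, (f i • r i - f i • β (p i) n)‖
          ≤ ∑ i, ‖f i • r i - f i • β (p i) n‖ := norm_sum_le _ _
        _ = ∑ i, ‖f i‖ * ‖r i - β (p i) n‖ := by
            refine Finset.sum_congr rfl fun i _ => ?_
            rw [← smul_sub, norm_smul]
        _ ≤ ∑ i, ‖f i‖ * ε'' := Finset.sum_le_sum fun i _ =>
            mul_le_mul_of_nonneg_left (hrnear i) (norm_nonneg _)
        _ = S * ε'' := by rw [hS, ← Finset.sum_mul]
    have hSe : S * ε'' ≤ ε/4 := by
      rw [hε''def, mul_div_assoc']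
      rw [div_le_iff₀ (by positivity)]
      nlinarith [hε.le, hS0]
    have hT2 : ‖(∑ i, f i • β (p i) n) - β x n‖ ≤ ε/16 := by
      rw [norm_sub_rev]
      exact hn4
    have e1 : (∑ i, f i • r i) - q = ((∑ i, f i • r i) - ∑ i, f i • β (p i) n)
        + ((∑ i, f i • β (p i) n) - β x n) + (β x n - β (ι q) n) + (β (ι q) n - q) := by abel
    rw [e1]
    calc ‖((∑ i, f i • r i) - ∑ i, f i • β (p i) n)
        + ((∑ i, f i • β (p i) n) - β x n) + (β x n - β (ι q) n) + (β (ι q) n - q)‖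
        ≤ ‖((∑ i, f i • r i) - ∑ i, f i • β (p i) n)
        + ((∑ i, f i • β (p i) n) - β x n) + (β x n - β (ι q) n)‖ + ‖β (ι q) n - q‖ :=
          norm_add_le _ _
      _ ≤ (‖(∑ i, f i • r i) - ∑ i, f i • β (p i) n‖
          + ‖(∑ i, f i • β (p i) n) - β x n‖ + ‖β x n - β (ι q) n‖) + ‖β (ι q) n - q‖ := by
          gcongr
          exact norm_add₃_le
      _ < ε := by linarith [hT1, hSe, hT2, hn2, hn3]
  · exact SetLike.mem_coe.mpr (Submodule.sum_mem _ fun i _ =>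
      Submodule.smul_mem _ _ (Submodule.subset_span ⟨(hrP i).1, (hrP i).2⟩))
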